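/- For positive integers n, e, sigma, j with e < n and j <= n - e, in a uniformly random rooted ordered forest with sigma trees and n-e edges, the probability that the root of the first tree has degree j is at most 4j/2^j, and the probability that the sum of root degrees of the first two trees equals j is at most 4j(j+1)/2^j. -/

import Mathlib

/-- `Phi σ e = (σ / (2e+σ)) * binomial (2e+σ) e` is the number of rooted ordered forests
with `σ` trees and `e` edges. -/

def Phi (σ e : ℕ) : ℚ := (σ : ℚ) * ((2 * e + σ).choose e : ℚ) / ((2 * e + σ : ℕ) : ℚ)

lemma phi_nonneg (σ e : ℕ) : 0 ≤ Phi σ e := by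
  unfold Phi; positivity


lemma phi_pos (σ e : ℕ) (h : 0 < σ) : 0 < Phi σ e := by
  unfold Phi
  have h1 : 0 < (2 * e + σ).choose e := Nat.choose_pos (by omega)
  have h2 : 0 < 2 * e + σ := by omega
  positivity


lemma phi_mono (τ e : ℕ) : Phi τ e ≤ Phi (τ + 1) e := by
  rcases Nat.eq_zero_or_pos τ with rfl | hτ
  · simpa [Phi] using phi_nonneg 1 e
  have hre : 2 * e + (τ + 1) = 2 * e + τ + 1 := by ring
  have hc : ((2 * e + τ).choose e : ℚ) * (2 * (e:ℚ) + τ + 1) =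
      ((2 * e + τ + 1).choose e : ℚ) * ((e:ℚ) + τ + 1) := by
    have := Nat.choose_mul_succ_eq (2 * e + τ) e
    have h2 : 2 * e + τ + 1 - e = e + τ + 1 := by omega
    rw [h2] at this
    exact_mod_cast this
  unfold Phi
  rw [hre]
  have hd1 : (0:ℚ) < ((2 * e + τ : ℕ) : ℚ) := by
    have : 0 < 2 * e + τ := by omega
    exact_mod_cast this
  have hd2 : (0:ℚ) < ((2 * e + τ + 1 : ℕ) : ℚ) := by
    have : 0 < 2 * e + τ + 1 := by omega
    exact_mod_cast this
  rw [div_le_div_iff₀ hd1 hd2]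
  have hC : (0:ℚ) ≤ ((2 * e + τ).choose e : ℚ) := by positivity
  have hτQ : (1:ℚ) ≤ (τ:ℚ) := by exact_mod_cast hτ
  have h3 : (0:ℚ) < (e:ℚ) + τ + 1 := by positivity
  push_cast
  have hkey : ((τ:ℚ)+1) * ((2 * e + τ + 1).choose e : ℚ) * (2*(e:ℚ)+τ) * ((e:ℚ)+τ+1)
      - (τ:ℚ) * ((2 * e + τ).choose e : ℚ) * (2*(e:ℚ)+τ+1) * ((e:ℚ)+τ+1)
      = ((2 * e + τ).choose e : ℚ) * (2*(e:ℚ)+τ+1) * ((e:ℚ)*τ + 2*e) := by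
    linear_combination (-((τ:ℚ)+1) * (2*(e:ℚ)+τ)) * hc
  have hnn : (0:ℚ) ≤ ((2 * e + τ).choose e : ℚ) * (2*(e:ℚ)+τ+1) * ((e:ℚ)*τ + 2*e) := by
    positivity
  nlinarith [hkey, hnn, h3]


lemma key_id (τ e : ℕ) (hτ : 0 < τ) :
    Phi (τ + 1) e * ((τ:ℚ) * (2*(e:ℚ)+τ+1)) = Phi τ (e+1) * (((τ:ℚ)+1) * ((e:ℚ)+1)) := by
  have hre1 : 2 * e + (τ + 1) = 2 * e + τ + 1 := by ring
  have hre2 : 2 * (e + 1) + τ = 2 * e + τ + 2 := by ring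
  have hn : (2*e+τ+2).choose (e+1) * (e+1) = (2*e+τ+2) * (2*e+τ+1).choose e := by
    simpa [Nat.succ_eq_add_one] using (Nat.add_one_mul_choose_eq (2*e+τ+1) e).symm
  have hc : ((2 * e + τ + 2).choose (e+1) : ℚ) * ((e:ℚ)+1)
      = (2*(e:ℚ)+τ+2) * ((2 * e + τ + 1).choose e : ℚ) := by exact_mod_cast hn
  unfold Phi
  rw [hre1, hre2]
  have hd1 : ((2 * e + τ + 1 : ℕ) : ℚ) ≠ 0 := by positivity
  have hd2 : ((2 * e + τ + 2 : ℕ) : ℚ) ≠ 0 := by positivity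
  field_simp
  push_cast
  linear_combination (-((τ:ℚ)+1) * (2*(e:ℚ)+(τ:ℚ)+1)) * hc


lemma main_bound (k : ℕ) : ∀ σ m : ℕ, 0 < σ →
    Phi (σ + k) m ≤ (4*((k:ℚ)+1)/2^(k+1)) * Phi σ (m+k+1) := by
  induction k with
  | zero =>
    intro σ m hσ
    have hσQ : (1:ℚ) ≤ (σ:ℚ) := by exact_mod_cast hσ
    have hP := phi_nonneg σ (m+1)
    have hD : (0:ℚ) < (σ:ℚ) * (2*(m:ℚ)+σ+1) := by positivity
    have hid := key_id σ m hσ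
    have hfac : ((σ:ℚ)+1)*((m:ℚ)+1) ≤ 2*((σ:ℚ)*(2*(m:ℚ)+σ+1)) := by
      have hm : (0:ℚ) ≤ (m:ℚ) := by positivity
      nlinarith
    have h2 : Phi σ (m+1) * (((σ:ℚ)+1)*((m:ℚ)+1))
        ≤ Phi σ (m+1) * (2*((σ:ℚ)*(2*(m:ℚ)+σ+1))) := by
      exact mul_le_mul_of_nonneg_left hfac hP
    have h3 : Phi (σ+1) m * ((σ:ℚ) * (2*(m:ℚ)+σ+1))
        ≤ (2 * Phi σ (m+1)) * ((σ:ℚ) * (2*(m:ℚ)+σ+1)) := by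
      rw [hid]; linarith
    have h4 : Phi (σ+1) m ≤ 2 * Phi σ (m+1) := le_of_mul_le_mul_right h3 hD
    have h5 := (phi_mono σ m).trans h4
    norm_num
    convert h5 using 2 <;> omega
  | succ k ih =>
    intro σ m hσ
    set τ := σ + k with hτdef
    have hτ : 0 < τ := by omega
    have hid := key_id τ m hτ
    have hIH := ih σ (m+1) hσ
    have hP := phi_nonneg σ (m+1+k+1)
    have hD : (0:ℚ) < (τ:ℚ) * (2*(m:ℚ)+τ+1) := by positivity
    have hck : (0:ℚ) < 4*((k:ℚ)+1)/2^(k+1) := by positivity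
    have hB := phi_nonneg τ (m+1)
    -- factor inequality
    have hσQ : (1:ℚ) ≤ (σ:ℚ) := by exact_mod_cast hσ
    have hτQ : (τ:ℚ) = (σ:ℚ) + k := by push_cast [hτdef]; ring
    have hfac : (4*((k:ℚ)+1)/2^(k+1)) * (((τ:ℚ)+1)*((m:ℚ)+1))
        ≤ (4*((k:ℚ)+1+1)/2^(k+1+1)) * ((τ:ℚ) * (2*(m:ℚ)+τ+1)) := by
      rw [div_mul_eq_mul_div, div_mul_eq_mul_div,
        div_le_div_iff₀ (by positivity) (by positivity), pow_succ]
      have hm : (0:ℚ) ≤ (m:ℚ) := by positivity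
      have hk : (0:ℚ) ≤ (k:ℚ) := by positivity
      rw [hτQ]
      have hσ0 : (0:ℚ) ≤ (σ:ℚ) - 1 := by linarith
      have hbase : 4*((k:ℚ)+1)*((((σ:ℚ)+(k:ℚ))+1)*((m:ℚ)+1))*2
          ≤ 4*((k:ℚ)+1+1)*(((σ:ℚ)+(k:ℚ))*(2*(m:ℚ)+((σ:ℚ)+(k:ℚ))+1)) := by
        nlinarith [mul_nonneg hσ0 hm, mul_nonneg hσ0 hk, mul_nonneg hm hk,
          mul_nonneg (mul_nonneg hσ0 hm) hk, mul_nonneg (mul_nonneg hσ0 hσ0) hm,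
          mul_nonneg (mul_nonneg hσ0 hσ0) hk, mul_nonneg (mul_nonneg hm hk) hk,
          mul_nonneg (mul_nonneg hσ0 hk) hk, mul_nonneg hk hk, mul_nonneg hσ0 hσ0]
      nlinarith [mul_le_mul_of_nonneg_right hbase
        (show (0:ℚ) ≤ 2^(k+1) by positivity)]
    -- chain
    have h1 : Phi (τ+1) m * ((τ:ℚ) * (2*(m:ℚ)+τ+1))
        ≤ (4*((k:ℚ)+1)/2^(k+1)) * Phi σ (m+1+k+1) * (((τ:ℚ)+1)*((m:ℚ)+1)) := by
      rw [hid]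
      exact mul_le_mul_of_nonneg_right hIH (by positivity)
    have h2 : (4*((k:ℚ)+1)/2^(k+1)) * Phi σ (m+1+k+1) * (((τ:ℚ)+1)*((m:ℚ)+1))
        ≤ (4*((k:ℚ)+1+1)/2^(k+1+1)) * Phi σ (m+1+k+1) * ((τ:ℚ) * (2*(m:ℚ)+τ+1)) := by
      have := mul_le_mul_of_nonneg_left hfac hP
      nlinarith [this]
    have h3 : Phi (τ+1) m ≤ (4*((k:ℚ)+1+1)/2^(k+1+1)) * Phi σ (m+1+k+1) :=
      le_of_mul_le_mul_right (h1.trans h2) hD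
    have he1 : σ + (k+1) = τ + 1 := by omega
    have he2 : m + (k+1) + 1 = m+1+k+1 := by omega
    rw [he1, he2]
    push_cast
    convert h3 using 3 <;> push_cast <;> ring

/-- In a uniformly random rooted ordered forest with `σ` trees and `n - e` edges
(`e < n`, `j ≤ n - e`), the probability that the root of the first tree has degree `j`,
namely `Φ_{σ+j-1, n-e-j} / Φ_{σ, n-e}`, is at most `4j/2^j`, and the probability that
the root degrees of the first two trees sum to `j`, namely
`(j+1) Φ_{σ+j-2, n-e-j} / Φ_{σ, n-e}`, is at most `4j(j+1)/2^j`. -/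
theorem stmt_5 (n e σ j : ℕ) (hn : 0 < n) (he : 0 < e) (hσ : 0 < σ) (hj : 0 < j)
    (hen : e < n) (hjn : j ≤ n - e) :
    Phi (σ + j - 1) (n - e - j) / Phi σ (n - e) ≤ 4 * (j : ℚ) / 2 ^ j ∧
    ((j : ℚ) + 1) * (Phi (σ + j - 2) (n - e - j) / Phi σ (n - e)) ≤
      4 * (j : ℚ) * ((j : ℚ) + 1) / 2 ^ j := by
  obtain ⟨k, rfl⟩ : ∃ k, j = k + 1 := ⟨j - 1, by omega⟩
  obtain ⟨m, hm⟩ : ∃ m, n - e = m + k + 1 := ⟨n - e - k - 1, by omega⟩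
  have h1 : σ + (k + 1) - 1 = σ + k := by omega
  have h2 : n - e - (k + 1) = m := by omega
  have hpos := phi_pos σ (n - e) hσ
  have hmain : Phi (σ + k) m ≤ (4*((k:ℚ)+1)/2^(k+1)) * Phi σ (n - e) := by
    rw [hm]; exact main_bound k σ m hσ
  have hpart1 : Phi (σ + (k+1) - 1) (n - e - (k+1)) / Phi σ (n - e)
      ≤ 4 * ((k:ℚ)+1) / 2 ^ (k+1) := by
    rw [h1, h2, div_le_iff₀ hpos]
    linarith [hmain]
  have hcast : 4 * ((k+1:ℕ) : ℚ) / 2 ^ (k+1) = 4 * ((k:ℚ)+1) / 2 ^ (k+1) := by push_cast; ring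
  constructor
  · rw [hcast]; exact hpart1
  · have hmono : Phi (σ + (k+1) - 2) (n - e - (k+1)) ≤ Phi (σ + (k+1) - 1) (n - e - (k+1)) := by
      have h3 : σ + (k+1) - 1 = (σ + (k+1) - 2) + 1 := by omega
      rw [h3]; exact phi_mono _ _
    have hdiv : Phi (σ + (k+1) - 2) (n - e - (k+1)) / Phi σ (n - e)
        ≤ 4 * ((k:ℚ)+1) / 2 ^ (k+1) := by
      refine le_trans ?_ hpart1
      gcongr
    have hj1 : (0:ℚ) ≤ ((k+1:ℕ):ℚ) + 1 := by positivity
    calc (((k+1:ℕ):ℚ) + 1) * (Phi (σ + (k+1) - 2) (n - e - (k+1)) / Phi σ (n - e))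
        ≤ (((k+1:ℕ):ℚ) + 1) * (4 * ((k:ℚ)+1) / 2 ^ (k+1)) :=
          mul_le_mul_of_nonneg_left hdiv hj1
      _ = 4 * ((k+1:ℕ):ℚ) * (((k+1:ℕ):ℚ) + 1) / 2 ^ (k+1) := by push_cast; ring
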